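/- arXiv:2601.12107 — 3 statements merged into one kernel-verified Lean document; each statement's English description precedes it below -/
import Mathlib

section
/- Let p ≥ 3 be a prime, n ≥ 2 an integer, and N = p^n·N₁, where gcd(p, N₁) = 1 and N₁ is either 1 or a product q₁q₂⋯q_r of distinct primes such that (q_i − 1) divides (p − 1) for every i. Let u be an integer with gcd(u, N) = 1, let m be any integer, fix an integer d with 0 < d < N, and let g = gcd(d, N). For k ∈ ℤ define h_d(k) = ((k+d)^p − k^p − d^p)·m + u·d·k. Then g divides h_d(k) for every integer k, and the N/g integers h_d(0)/g, h_d(1)/g, …, h_d(N/g − 1)/g are pairwise incongruent modulo N/g, i.e., they form a complete residue system modulo N/g (so h_d(k)/g induces a permutation of ℤ/(N/g)ℤ). -/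
/-- Each term of the binomial expansion difference is divisible by `p * D * (x - y)`. -/
lemma aux_key_dvd (p : ℕ) (hp : p.Prime) (x y D : ℤ) :
    (p : ℤ) * D * (x - y) ∣ ((x + D) ^ p - x ^ p) - ((y + D) ^ p - y ^ p) := by
  have hx := add_pow x D p
  have hy := add_pow y D p
  rw [Finset.sum_range_succ] at hx hy
  simp only [Nat.choose_self, Nat.sub_self, pow_zero, Nat.cast_one, mul_one] at hx hy
  have h1 : (x + D) ^ p - x ^ p
      = ∑ j ∈ Finset.range p, x ^ j * D ^ (p - j) * (p.choose j : ℤ) := by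
    rw [hx]; ring
  have h2 : (y + D) ^ p - y ^ p
      = ∑ j ∈ Finset.range p, y ^ j * D ^ (p - j) * (p.choose j : ℤ) := by
    rw [hy]; ring
  rw [h1, h2, ← Finset.sum_sub_distrib]
  apply Finset.dvd_sum
  intro j hj
  rw [Finset.mem_range] at hj
  rcases eq_or_ne j 0 with rfl | hj0
  · simp
  · obtain ⟨a, ha⟩ := sub_dvd_pow_sub_pow x y j
    obtain ⟨b, hb⟩ := hp.dvd_choose_self hj0 hj
    have hD : D ^ (p - j) = D * D ^ (p - j - 1) := by
      rw [← pow_succ']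
      congr 1
      omega
    refine ⟨a * D ^ (p - j - 1) * (b : ℤ), ?_⟩
    have key : x ^ j * D ^ (p - j) * ((p.choose j : ℕ) : ℤ)
        - y ^ j * D ^ (p - j) * ((p.choose j : ℕ) : ℤ)
        = (x ^ j - y ^ j) * (D * D ^ (p - j - 1)) * ((p.choose j : ℕ) : ℤ) := by
      rw [← hD]; ring
    rw [key, ha, hb]
    push_cast
    ring

/-- Fermat-type congruence: if `q` is prime and `(q-1) ∣ (p-1)` then `x^p ≡ x (mod q)`. -/
lemma aux_fermat (p q : ℕ) (hq : q.Prime) (hp1 : 1 ≤ p) (hdvd : (q - 1) ∣ (p - 1)) (x : ℤ) :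
    (q : ℤ) ∣ x ^ p - x := by
  haveI := Fact.mk hq
  have hzm : ((x ^ p - x : ℤ) : ZMod q) = 0 := by
    push_cast
    have hpow : (x : ZMod q) ^ p = (x : ZMod q) := by
      set a : ZMod q := (x : ZMod q)
      rcases eq_or_ne a 0 with h0 | h0
      · rw [h0, zero_pow (by omega)]
      · obtain ⟨s, hs⟩ := hdvd
        have h1 : a ^ (q - 1) = 1 := ZMod.pow_card_sub_one_eq_one h0
        calc a ^ p = a ^ (p - 1) * a := by rw [← pow_succ]; congr 1; omega
        _ = (a ^ (q - 1)) ^ s * a := by rw [← pow_mul, ← hs]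
        _ = a := by rw [h1, one_pow, one_mul]
    rw [hpow]
    ring
  exact (ZMod.intCast_zmod_eq_zero_iff_dvd _ _).mp hzm

/-- Lemma D.1 (Appendix D): let `p ≥ 3` be prime, `n ≥ 2`, `N = p^n·N₁` with `gcd(p,N₁)=1`
and `N₁` equal to `1` or a product of distinct primes `qᵢ` with `(qᵢ−1) ∣ (p−1)`.
For `gcd(u,N)=1`, any integer `m`, a shift `0 < d < N` and `g = gcd(d,N)`, the quantity
`h_d(k) = ((k+d)^p − k^p − d^p)·m + u·d·k` is divisible by `g` for every `k`, and
`h_d(k)/g` induces a permutation of `ℤ_{N/g}` (its values at `k = 0,…,N/g−1` form a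
complete residue system modulo `N/g`). -/
theorem stmt_13 (p : ℕ) (hp : p.Prime) (hp3 : 3 ≤ p) (n : ℕ) (hn : 2 ≤ n)
    (N N₁ : ℕ) (hN : N = p ^ n * N₁) (hcop : Nat.Coprime p N₁)
    (r : ℕ) (q : Fin r → ℕ) (hq : ∀ i, (q i).Prime) (hinj : Function.Injective q)
    (hN₁ : N₁ = ∏ i, q i) (hqdvd : ∀ i, (q i - 1) ∣ (p - 1))
    (u : ℤ) (hu : Int.gcd u (N : ℤ) = 1) (m : ℤ)
    (d : ℕ) (hd0 : 0 < d) (hdN : d < N) (g : ℕ) (hg : g = Nat.gcd d N)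
    (h : ℤ → ℤ)
    (hh : ∀ k : ℤ, h k =
      ((k + (d : ℤ)) ^ p - k ^ p - (d : ℤ) ^ p) * m + u * (d : ℤ) * k) :
    (∀ k : ℤ, (g : ℤ) ∣ h k) ∧
    Function.Bijective
      (fun k : Fin (N / g) => ((h ((k : ℕ) : ℤ) / (g : ℤ)) : ZMod (N / g))) := by
  have hNpos : 0 < N := lt_trans hd0 hdN
  have hgd : g ∣ d := hg ▸ Nat.gcd_dvd_left d N
  have hgN : g ∣ N := hg ▸ Nat.gcd_dvd_right d N
  have hgpos : 0 < g := hg ▸ Nat.gcd_pos_of_pos_left N hd0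
  set M : ℕ := N / g with hM
  have hMpos : 0 < M := Nat.div_pos (Nat.le_of_dvd hNpos hgN) hgpos
  have hgM : (N : ℤ) = (g : ℤ) * (M : ℤ) := by
    rw [hM]
    exact_mod_cast (Nat.mul_div_cancel' hgN).symm
  set d' : ℕ := d / g with hd'
  have hgd' : (d : ℤ) = (g : ℤ) * (d' : ℤ) := by
    rw [hd']
    exact_mod_cast (Nat.mul_div_cancel' hgd).symm
  have hcopd'M : Nat.Coprime d' M := by
    rw [hd', hM, hg]
    exact Nat.coprime_div_gcd_div_gcd (hg ▸ hgpos)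
  -- coprimality of u with N as IsCoprime
  have hcopuN : IsCoprime u (N : ℤ) := Int.isCoprime_iff_gcd_eq_one.mpr hu
  -- Part 1: divisibility
  have hdvd_d : ∀ k : ℤ, (d : ℤ) ∣ h k := by
    intro k
    rw [hh k]
    apply dvd_add
    · apply Dvd.dvd.mul_right
      have h1 : (d : ℤ) ∣ (k + d) ^ p - k ^ p := by
        have := sub_dvd_pow_sub_pow (k + (d : ℤ)) k p
        simpa using this
      have h2 : (d : ℤ) ∣ (d : ℤ) ^ p := dvd_pow_self _ (by omega)
      have : (k + (d:ℤ)) ^ p - k ^ p - (d:ℤ) ^ p = ((k + d) ^ p - k ^ p) - (d:ℤ) ^ p := by ring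
      rw [this]
      exact dvd_sub h1 h2
    · exact Dvd.dvd.mul_right (Dvd.dvd.mul_left (dvd_refl (d : ℤ)) u) k
  have part1 : ∀ k : ℤ, (g : ℤ) ∣ h k := by
    intro k
    exact dvd_trans (by exact_mod_cast Int.natCast_dvd_natCast.mpr hgd) (hdvd_d k)
  refine ⟨part1, ?_⟩
  -- Part 2: bijectivity
  haveI : NeZero M := ⟨hMpos.ne'⟩
  rw [Fintype.bijective_iff_injective_and_card]
  constructor
  swap
  · simp [ZMod.card]
  intro k k' hkk
  simp only at hkk
  set K : ℤ := ((k : ℕ) : ℤ) with hK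
  set K' : ℤ := ((k' : ℕ) : ℤ) with hK'
  -- from ZMod equality to divisibility by N of h K - h K'
  have hmodeq : h K / (g : ℤ) ≡ h K' / (g : ℤ) [ZMOD (M : ℕ)] :=
    (ZMod.intCast_eq_intCast_iff _ _ _).mp hkk
  have hMdvd : (M : ℤ) ∣ h K / (g : ℤ) - h K' / (g : ℤ) := Int.ModEq.dvd hmodeq.symm
  have hNdvd : (N : ℤ) ∣ h K - h K' := by
    have e1 : (g : ℤ) * (h K / (g : ℤ)) = h K := Int.mul_ediv_cancel' (part1 K)
    have e2 : (g : ℤ) * (h K' / (g : ℤ)) = h K' := Int.mul_ediv_cancel' (part1 K')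
    have := mul_dvd_mul_left (g : ℤ) hMdvd
    rw [mul_sub, e1, e2] at this
    rwa [hgM]
  set D : ℤ := (d : ℤ) with hD
  set t : ℤ := K - K' with ht
  -- key factorization : h K - h K' = D * t * c with c = u + m * (p * W)
  obtain ⟨W, hW⟩ := aux_key_dvd p hp K K' D
  set c : ℤ := u + m * ((p : ℤ) * W) with hc
  have hfac : h K - h K' = D * t * c := by
    rw [hh K, hh K', hc, ht]
    have : ((K + D) ^ p - K ^ p) - ((K' + D) ^ p - K' ^ p) = (p : ℤ) * D * (K - K') * W := hW
    linear_combination m * this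
  -- u is coprime to every divisor of N ; helper : no prime divisor of N divides u
  have hnotdvd_u : ∀ ℓ : ℕ, ℓ.Prime → ℓ ∣ N → ¬ ((ℓ : ℤ) ∣ u) := by
    intro ℓ hℓ hℓN hℓu
    have h1 : (ℓ : ℤ) ∣ Int.gcd u (N : ℤ) :=
      Int.dvd_coe_gcd hℓu (by exact_mod_cast Int.natCast_dvd_natCast.mpr hℓN)
    rw [hu] at h1
    have : (ℓ : ℤ) ≤ 1 := Int.le_of_dvd one_pos h1
    have := hℓ.two_le
    omega
  -- Step 1 : p ^ n divides D * t
  have hpn_dvd : ((p : ℤ) ^ n) ∣ D * t := by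
    have h1 : ((p : ℤ) ^ n) ∣ D * t * c := by
      refine dvd_trans ?_ (hfac ▸ hNdvd)
      rw [hN]
      push_cast
      exact dvd_mul_right _ _
    have hpc : IsCoprime ((p : ℤ)) c := by
      rw [Int.isCoprime_iff_gcd_eq_one]
      have hnd : ¬ ((p : ℤ) ∣ c) := by
        intro hdc
        have hpu : (p : ℤ) ∣ u := by
          have he : u = c - m * ((p : ℤ) * W) := by rw [hc]; ring
          rw [he]
          exact dvd_sub hdc ((dvd_mul_right (p:ℤ) W).mul_left m)
        exact hnotdvd_u p hp (by rw [hN]; exact Dvd.dvd.mul_right (dvd_pow_self p (by omega)) N₁) hpu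
      have : Nat.Coprime p c.natAbs :=
        (hp.coprime_iff_not_dvd).mpr (fun hd => hnd (Int.natCast_dvd.mpr hd))
      unfold Int.gcd
      simpa using this
    exact (hpc.pow_left).dvd_of_dvd_mul_right h1
  -- Step 2 : each q i divides D * t * u
  have hq_dvd : ∀ i : Fin r, ((q i : ℤ)) ∣ D * t * u := by
    intro i
    have hqiN₁ : q i ∣ N₁ := hN₁ ▸ Finset.dvd_prod_of_mem q (Finset.mem_univ i)
    have hqiN : q i ∣ N := hN ▸ hqiN₁.mul_left _
    have hqiprime : Prime ((q i : ℤ)) := Int.prime_iff_natAbs_prime.mpr (by simpa using hq i)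
    have h1 : ((q i : ℤ)) ∣ D * t * c := by
      refine dvd_trans ?_ (hfac ▸ hNdvd)
      exact_mod_cast Int.natCast_dvd_natCast.mpr hqiN
    by_cases hqd : (q i : ℤ) ∣ D
    · exact (hqd.mul_right t).mul_right u
    by_cases hqt : (q i : ℤ) ∣ t
    · exact ((hqt.mul_left D).mul_right u)
    -- else derive a contradiction
    exfalso
    have hqc : (q i : ℤ) ∣ c := by
      rcases (hqiprime.dvd_mul).mp h1 with h2 | h2
      · rcases (hqiprime.dvd_mul).mp h2 with h3 | h3
        · exact absurd h3 hqd
        · exact absurd h3 hqt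
      · exact h2
    -- q i divides the polynomial difference P = p * D * t * W by Fermat
    have hqP : (q i : ℤ) ∣ (p : ℤ) * D * t * W := by
      rw [← hW]
      have f1 := aux_fermat p (q i) (hq i) (by omega) (hqdvd i) (K + D)
      have f2 := aux_fermat p (q i) (hq i) (by omega) (hqdvd i) K
      have f3 := aux_fermat p (q i) (hq i) (by omega) (hqdvd i) (K' + D)
      have f4 := aux_fermat p (q i) (hq i) (by omega) (hqdvd i) K'
      have : ((K + D) ^ p - K ^ p) - ((K' + D) ^ p - K' ^ p)
          = ((K + D) ^ p - (K + D)) - (K ^ p - K) - (((K' + D) ^ p - (K' + D)) - (K' ^ p - K')) := by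
        ring
      rw [this]
      exact dvd_sub (dvd_sub f1 f2) (dvd_sub f3 f4)
    have hqnp : ¬ ((q i : ℤ) ∣ (p : ℤ)) := by
      intro hdp
      have : q i ∣ p := Int.natCast_dvd_natCast.mp hdp
      have hqp : q i = p := ((Nat.prime_dvd_prime_iff_eq (hq i) hp).mp this)
      have : Nat.Coprime p (q i) := hcop.coprime_dvd_right hqiN₁
      rw [hqp] at this
      rw [Nat.Coprime, Nat.gcd_self] at this
      omega
    have hqW : (q i : ℤ) ∣ W := by
      rcases (hqiprime.dvd_mul).mp hqP with h2 | h2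
      · rcases (hqiprime.dvd_mul).mp h2 with h3 | h3
        · rcases (hqiprime.dvd_mul).mp h3 with h4 | h4
          · exact absurd h4 hqnp
          · exact absurd h4 hqd
        · exact absurd h3 hqt
      · exact h2
    have hqu : (q i : ℤ) ∣ u := by
      have he : u = c - m * ((p : ℤ) * W) := by rw [hc]; ring
      rw [he]
      exact dvd_sub hqc ((hqW.mul_left (p:ℤ)).mul_left m)
    exact hnotdvd_u (q i) (hq i) hqiN hqu
  -- combine : N ∣ D * t * u
  have hN₁_dvd : ((N₁ : ℤ)) ∣ D * t * u := by
    have hcast : ((N₁ : ℤ)) = ∏ i : Fin r, ((q i : ℕ) : ℤ) := by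
      rw [hN₁]; push_cast; rfl
    rw [hcast]
    apply Finset.prod_dvd_of_coprime
    · intro i _ j _ hij
      have : q i ≠ q j := fun e => hij (hinj e)
      exact Nat.isCoprime_iff_coprime.mpr ((Nat.coprime_primes (hq i) (hq j)).mpr this)
    · intro i _
      exact hq_dvd i
  have hNdvdDtu : (N : ℤ) ∣ D * t * u := by
    have hcoprime : IsCoprime ((p : ℤ) ^ n) ((N₁ : ℤ)) := by
      have := Nat.Coprime.pow_left n hcop
      exact_mod_cast Nat.isCoprime_iff_coprime.mpr this
    have := hcoprime.mul_dvd (hpn_dvd.mul_right u) hN₁_dvd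
    rw [hN]
    push_cast
    exact this
  -- cancel u then g then d'
  have hNdvdDt : (N : ℤ) ∣ D * t := by
    have hcop2 : IsCoprime ((N : ℤ)) u := hcopuN.symm
    exact hcop2.dvd_of_dvd_mul_right hNdvdDtu
  have hMt : (M : ℤ) ∣ t := by
    have h1 : (g : ℤ) * (M : ℤ) ∣ (g : ℤ) * ((d' : ℤ) * t) := by
      rw [← hgM, ← mul_assoc, ← hgd']
      exact hNdvdDt
    have h2 : (M : ℤ) ∣ (d' : ℤ) * t := by
      have hgne : (g : ℤ) ≠ 0 := by exact_mod_cast hgpos.ne'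
      exact (mul_dvd_mul_iff_left hgne).mp h1
    have hcop3 : IsCoprime ((M : ℤ)) ((d' : ℤ)) :=
      (Nat.isCoprime_iff_coprime.mpr hcopd'M).symm
    exact hcop3.dvd_of_dvd_mul_left h2
  -- conclude t = 0
  have hkM : (k : ℕ) < M := k.isLt
  have hk'M : (k' : ℕ) < M := k'.isLt
  obtain ⟨e, he⟩ := hMt
  have ht0 : t = 0 := by
    have hb1 : t < (M : ℤ) := by rw [ht, hK, hK']; push_cast; omega
    have hb2 : -(M : ℤ) < t := by rw [ht, hK, hK']; push_cast; omega
    have hMz : (0 : ℤ) < (M : ℤ) := by exact_mod_cast hMpos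
    rw [he] at hb1 hb2 ⊢
    have he1 : e < 1 := by
      have hx : (M : ℤ) * e < (M : ℤ) * 1 := by rw [mul_one]; exact hb1
      exact (mul_lt_mul_iff_right₀ hMz).mp hx
    have he2 : -1 < e := by
      have hx : (M : ℤ) * (-1) < (M : ℤ) * e := by rw [mul_neg_one]; linarith
      exact (mul_lt_mul_iff_right₀ hMz).mp hx
    have he0 : e = 0 := by omega
    rw [he0, mul_zero]
  have hKK : K = K' := by
    have h0 : K - K' = 0 := by rw [← ht]; exact ht0
    linarith
  have : (k : ℕ) = (k' : ℕ) := by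
    rw [hK, hK'] at hKK
    exact_mod_cast hKK
  exact Fin.ext this
end

section
/- Let p ≥ 3 be a prime, n ≥ 2 an integer, and N = p^n·N₁, where gcd(p, N₁) = 1 and N₁ is either 1 or a product q₁q₂⋯q_r of distinct primes such that (q_i − 1) divides (p − 1) for every i. Let a, b be integers such that π(x) = x^p + a·x + b is a permutation polynomial over ℤ_N with a ≢ 0 (mod p) and a ≢ −1 (mod p), and write δ = N mod 2. Then for all integers u₁, u₂ coprime to N, all integers v, d, r, and each ε ∈ {1, −1}: (a) there exists an integer k such that u₁·(π(k) + δ)·π(k) − 2·v·k − ε·u₂·(k + d + δ)·(k + d) − r ≢ 0 (mod 2N); and (b) there exists an integer k such that u₁·(k + δ)·k − 2·v·π(k) − ε·u₂·(π(k) + d + δ)·(π(k) + d) − r ≢ 0 (mod 2N). Consequently, neither the interleaved sequence s∘π nor s∘π⁻¹ is obtained from any Zadoff–Chu sequence by any composition of rotation, translation, decimation, linear frequency modulation, and conjugation. -/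
private lemma fermat_int (p : ℕ) (hp : p.Prime) (k : ℤ) : (p : ℤ) ∣ k ^ p - k := by
  haveI := Fact.mk hp
  have h : ((k ^ p - k : ℤ) : ZMod p) = 0 := by
    push_cast
    rw [ZMod.pow_card]
    ring
  exact (ZMod.intCast_zmod_eq_zero_iff_dvd _ _).mp h

private lemma pow_step_int (p : ℕ) (k : ℤ) : (p : ℤ) ^ 2 ∣ (k + p) ^ p - k ^ p := by
  have h := dvd_sub_pow_of_dvd_sub (R := ℤ) (p := p) (a := k + p) (b := k) (by simp) 1
  simpa using h

private lemma aux_key (p : ℕ) (hp : p.Prime) (hp3 : 3 ≤ p) (a b δ u₁ w v e d r : ℤ)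
    (hu₁ : ¬ (p : ℤ) ∣ u₁) (ha1 : ¬ (p : ℤ) ∣ (a + 1))
    (H : ∀ k : ℤ, (p : ℤ) ^ 2 ∣
      u₁ * ((k ^ p + a * k + b) + δ) * (k ^ p + a * k + b) + w * (k ^ p + a * k + b)
        - 2 * v * k - e * (k + d + δ) * (k + d) - r) : False := by
  have hpI : Prime (p : ℤ) := Nat.prime_iff_prime_int.mp hp
  have hp2 : ¬ (p : ℤ) ∣ 2 := by
    intro h
    have := Int.le_of_dvd (by norm_num) h
    omega
  set P : ℤ → ℤ := fun k => k ^ p + a * k + b with hPdef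
  set c : ℤ → ℤ := fun k => (a + 1) * k + b with hcdef
  set F : ℤ → ℤ := fun k =>
    u₁ * (P k + δ) * P k + w * P k - 2 * v * k - e * (k + d + δ) * (k + d) - r with hFdef
  set Q : ℤ → ℤ := fun k =>
    u₁ * (c k + δ) * c k + w * c k - 2 * v * k - e * (k + d + δ) * (k + d) - r with hQdef
  have hF : ∀ k : ℤ, (p : ℤ) ^ 2 ∣ F k := H
  have hFp : ∀ k : ℤ, (p : ℤ) ∣ F k := fun k =>
    dvd_trans (dvd_pow_self (p : ℤ) two_ne_zero) (hF k)
  have hPc : ∀ k : ℤ, P k ≡ c k [ZMOD (p : ℤ)] := by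
    intro k
    rw [Int.modEq_iff_dvd]
    have h1 : c k - P k = -(k ^ p - k) := by simp only [hPdef, hcdef]; ring
    rw [h1]
    exact dvd_neg.mpr (fermat_int p hp k)
  -- Step 1 : p ∣ Q k for all k
  have hQ : ∀ k : ℤ, (p : ℤ) ∣ Q k := by
    intro k
    have h1 := hPc k
    have h2 : F k ≡ Q k [ZMOD (p : ℤ)] :=
      (((((Int.ModEq.refl u₁).mul (h1.add_right δ)).mul h1).add (h1.mul_left w)).sub
        (Int.ModEq.refl (2 * v * k))).sub (Int.ModEq.refl (e * (k + d + δ) * (k + d)))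
        |>.sub (Int.ModEq.refl r)
    exact Int.modEq_zero_iff_dvd.mp
      (h2.symm.trans (Int.modEq_zero_iff_dvd.mpr (hFp k)))
  have hC1 : (p : ℤ) ∣ u₁ * (a + 1) ^ 2 - e := by
    have h := dvd_sub (dvd_add (hQ 1) (hQ (-1))) (Dvd.dvd.mul_left (hQ 0) 2)
    have heq : Q 1 + Q (-1) - 2 * Q 0 = 2 * (u₁ * (a + 1) ^ 2 - e) := by
      simp only [hQdef, hcdef]; ring
    rw [heq] at h
    exact (hpI.dvd_mul.mp h).resolve_left hp2
  -- Step 2 : mod p² difference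
  set L : ℤ → ℤ := fun k =>
    u₁ * a * (2 * P k + δ) + w * a - 2 * v - e * (2 * k + 2 * d + δ) with hLdef
  have hL : ∀ k : ℤ, (p : ℤ) ∣ L k := by
    intro k
    have hstep : P (k + p) ≡ P k + a * (p : ℤ) [ZMOD (p : ℤ) ^ 2] := by
      rw [Int.modEq_iff_dvd]
      have h1 : (P k + a * (p : ℤ)) - P (k + p) = -((k + p) ^ p - k ^ p) := by
        simp only [hPdef]; ring
      rw [h1]
      exact dvd_neg.mpr (pow_step_int p k)
    set G : ℤ :=
      u₁ * (P k + a * (p : ℤ) + δ) * (P k + a * (p : ℤ)) + w * (P k + a * (p : ℤ))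
        - 2 * v * (k + p) - e * (k + p + d + δ) * (k + p + d) - r with hGdef
    have h2 : F (k + p) ≡ G [ZMOD (p : ℤ) ^ 2] :=
      (((((Int.ModEq.refl u₁).mul (hstep.add_right δ)).mul hstep).add
        (hstep.mul_left w)).sub (Int.ModEq.refl (2 * v * (k + p)))).sub
        (Int.ModEq.refl (e * (k + p + d + δ) * (k + p + d))) |>.sub (Int.ModEq.refl r)
    have hG : (p : ℤ) ^ 2 ∣ G :=
      Int.modEq_zero_iff_dvd.mp (h2.symm.trans (Int.modEq_zero_iff_dvd.mpr (hF (k + p))))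
    have h3 : (p : ℤ) ^ 2 ∣ G - F k := dvd_sub hG (hF k)
    have heq : G - F k = (p : ℤ) * L k + (p : ℤ) ^ 2 * (u₁ * a ^ 2 - e) := by
      simp only [hGdef, hFdef, hLdef]; ring
    rw [heq] at h3
    have h4 : (p : ℤ) ^ 2 ∣ (p : ℤ) * L k := (dvd_add_right (dvd_mul_right _ _)).mp
      (by rwa [add_comm] at h3)
    rw [pow_two] at h4
    exact (mul_dvd_mul_iff_left (by exact_mod_cast hp.ne_zero : (p : ℤ) ≠ 0)).mp h4
  have hP0 : P 0 = b := by simp [hPdef, zero_pow hp.pos.ne']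
  have hP1 : P 1 = 1 + a + b := by simp [hPdef]
  have hC2 : (p : ℤ) ∣ u₁ * a * (a + 1) - e := by
    have h := dvd_sub (hL 1) (hL 0)
    have heq : L 1 - L 0 = 2 * (u₁ * a * (a + 1) - e) := by
      simp only [hLdef, hP0, hP1]; ring
    rw [heq] at h
    exact (hpI.dvd_mul.mp h).resolve_left hp2
  have hfin : (p : ℤ) ∣ u₁ * (a + 1) := by
    have h := dvd_sub hC1 hC2
    have heq : u₁ * (a + 1) ^ 2 - e - (u₁ * a * (a + 1) - e) = u₁ * (a + 1) := by ring
    rwa [heq] at h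
  rcases hpI.dvd_mul.mp hfin with h | h
  · exact hu₁ h
  · exact ha1 h

/-- Proposition 5.3(i): under the setting of Theorem 4.1 (with `π(x) = x^p + a·x + b` a
permutation polynomial over `ℤ_N`, `a ≢ 0, −1 (mod p)`, `δ = N mod 2`), the CAZAC
sequences `s∘π` and `s∘π⁻¹` are inequivalent to ZC sequences: for all `u₁, u₂` coprime to
`N`, all `v, d, r` and each sign `ε ∈ {1,−1}`, (a) there is `k` with
`u₁(π(k)+δ)π(k) − 2vk − ε·u₂(k+d+δ)(k+d) − r ≢ 0 (mod 2N)`, and (b) there is `k` with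
`u₁(k+δ)k − 2v·π(k) − ε·u₂(π(k)+d+δ)(π(k)+d) − r ≢ 0 (mod 2N)`. -/
theorem stmt_16 (p : ℕ) (hp : p.Prime) (hp3 : 3 ≤ p) (n : ℕ) (hn : 2 ≤ n)
    (N N₁ : ℕ) (hN : N = p ^ n * N₁) (hcop : Nat.Coprime p N₁)
    (r' : ℕ) (q : Fin r' → ℕ) (hq : ∀ i, (q i).Prime) (hinj : Function.Injective q)
    (hN₁ : N₁ = ∏ i, q i) (hqdvd : ∀ i, (q i - 1) ∣ (p - 1))
    (a b : ℤ)
    (hPP : Function.Bijective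
      (fun x : ZMod N => x ^ p + (a : ZMod N) * x + (b : ZMod N)))
    (ha0 : ¬ a ≡ 0 [ZMOD (p : ℤ)]) (ha1 : ¬ a ≡ -1 [ZMOD (p : ℤ)]) :
    ∀ (u₁ u₂ : ℤ), Int.gcd u₁ (N : ℤ) = 1 → Int.gcd u₂ (N : ℤ) = 1 →
      ∀ (v d r : ℤ) (ε : ℤ), (ε = 1 ∨ ε = -1) →
        ((∃ k : ℤ, ¬ ((2 * (N : ℤ)) ∣
            (u₁ * ((k ^ p + a * k + b) + ((N % 2 : ℕ) : ℤ)) * (k ^ p + a * k + b)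
              - 2 * v * k
              - ε * u₂ * (k + d + ((N % 2 : ℕ) : ℤ)) * (k + d) - r))) ∧
          (∃ k : ℤ, ¬ ((2 * (N : ℤ)) ∣
            (u₁ * (k + ((N % 2 : ℕ) : ℤ)) * k
              - 2 * v * (k ^ p + a * k + b)
              - ε * u₂ * ((k ^ p + a * k + b) + d + ((N % 2 : ℕ) : ℤ))
                  * ((k ^ p + a * k + b) + d) - r)))) := by
  intro u₁ u₂ hg1 hg2 v d r ε hε
  set δ : ℤ := ((N % 2 : ℕ) : ℤ) with hδ
  have hpNn : (p ^ 2 : ℕ) ∣ N := hN ▸ dvd_mul_of_dvd_left (pow_dvd_pow p hn) N₁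
  have hpN : (p : ℤ) ^ 2 ∣ 2 * (N : ℤ) := by
    refine dvd_mul_of_dvd_right ?_ 2
    exact_mod_cast hpNn
  have hpN1 : (p : ℤ) ∣ (N : ℤ) := by
    have : (p : ℤ) ∣ (p : ℤ) ^ 2 := dvd_pow_self _ two_ne_zero
    exact this.trans (by exact_mod_cast hpNn)
  have hu₁p : ¬ (p : ℤ) ∣ u₁ := by
    intro h
    have hc : IsCoprime u₁ (N : ℤ) := Int.isCoprime_iff_gcd_eq_one.mpr hg1
    have hu := hc.isUnit_of_dvd' h hpN1
    rw [Int.isUnit_iff] at hu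
    omega
  have hu₂p : ¬ (p : ℤ) ∣ u₂ := by
    intro h
    have hc : IsCoprime u₂ (N : ℤ) := Int.isCoprime_iff_gcd_eq_one.mpr hg2
    have hu := hc.isUnit_of_dvd' h hpN1
    rw [Int.isUnit_iff] at hu
    omega
  have ha1' : ¬ (p : ℤ) ∣ (a + 1) := by
    intro h
    apply ha1
    rw [Int.modEq_iff_dvd, show (-1 - a : ℤ) = -(a + 1) by ring]
    exact dvd_neg.mpr h
  have hεu₂ : ¬ (p : ℤ) ∣ -(ε * u₂) := by
    rw [dvd_neg]
    intro h
    have hpI : Prime (p : ℤ) := Nat.prime_iff_prime_int.mp hp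
    rcases hpI.dvd_mul.mp h with h' | h'
    · rcases hε with h1 | h1 <;> subst h1
      · have := Int.le_of_dvd (by norm_num) h'
        omega
      · have := Int.le_of_dvd (by norm_num) (dvd_neg.mpr h' : (p : ℤ) ∣ 1)
        omega
    · exact hu₂p h'
  constructor
  · by_contra hcon
    push_neg at hcon
    refine aux_key p hp hp3 a b δ u₁ 0 v (ε * u₂) d r hu₁p ha1' (fun k => ?_)
    have h2 := hpN.trans (hcon k)
    have heq : u₁ * ((k ^ p + a * k + b) + δ) * (k ^ p + a * k + b)
        + 0 * (k ^ p + a * k + b) - 2 * v * k - (ε * u₂) * (k + d + δ) * (k + d) - r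
        = u₁ * ((k ^ p + a * k + b) + δ) * (k ^ p + a * k + b)
          - 2 * v * k - ε * u₂ * (k + d + δ) * (k + d) - r := by ring
    rw [heq]
    exact h2
  · by_contra hcon
    push_neg at hcon
    refine aux_key p hp hp3 a (b + d) δ (-(ε * u₂)) (-(2 * v)) 0 (-u₁) 0 (r - 2 * v * d)
      hεu₂ ha1' (fun k => ?_)
    have h2 := hpN.trans (hcon k)
    have heq : (-(ε * u₂)) * ((k ^ p + a * k + (b + d)) + δ) * (k ^ p + a * k + (b + d))
        + (-(2 * v)) * (k ^ p + a * k + (b + d)) - 2 * 0 * k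
        - (-u₁) * (k + 0 + δ) * (k + 0) - (r - 2 * v * d)
        = u₁ * (k + δ) * k - 2 * v * (k ^ p + a * k + b)
          - ε * u₂ * ((k ^ p + a * k + b) + d + δ) * ((k ^ p + a * k + b) + d) - r := by
      ring
    rw [heq]
    exact h2
end

section
/- Let p ≥ 3 be a prime, n ≥ 2 an integer, and N = p^n·N₁, where gcd(p, N₁) = 1 and N₁ is either 1 or a product q₁q₂⋯q_r of distinct primes such that (q_i − 1) divides (p − 1) for every i. Let a, b be integers such that π(x) = x^p + a·x + b is a permutation polynomial over ℤ_N with a ≢ 0 (mod p) and a ≢ −1 (mod p), and write δ = N mod 2. Let π′(x) = f₂x² + f₁x be any quadratic polynomial with integer coefficients that is a permutation polynomial over ℤ_N with f₂ ≡ 0 (mod p) and f₁ ≢ 0 (mod p). Then for all integers u₁, u₂ coprime to N, all integers v, d, r, and each ε ∈ {1, −1}: (a) there exists an integer k such that u₁·(π(k) + δ)·π(k) − 2·v·k − ε·u₂·(π′(k) + d + δ)·(π′(k) + d) − r ≢ 0 (mod 2N); and (b) there exists an integer k such that u₁·(π(π′(k)) + δ)·π(π′(k)) − 2·v·π′(k)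 − ε·u₂·(k + d + δ)·(k + d) − r ≢ 0 (mod 2N). Consequently, the CAZAC sequence s∘π is not obtained from any ZC sequence interleaved by a quadratic permutation polynomial, or by the inverse of a quadratic permutation polynomial, via any composition of rotation, translation, decimation, linear frequency modulation, and conjugation. -/
/-- Proposition 5.3(ii): under the setting of Theorem 4.1 (with `π(x) = x^p + a·x + b` a
permutation polynomial over `ℤ_N`, `a ≢ 0, −1 (mod p)`, `δ = N mod 2`), and for any
quadratic permutation polynomial `π'(x) = f₂x² + f₁x` over `ℤ_N` with `p ∣ f₂` and
`p ∤ f₁`, the CAZAC sequence `s∘π` is inequivalent to ZC sequences interleaved by `π'` or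
by the inverse of `π'`: for all `u₁, u₂` coprime to `N`, all `v, d, r` and each sign
`ε ∈ {1,−1}`, (a) there is `k` with
`u₁(π(k)+δ)π(k) − 2vk − ε·u₂(π'(k)+d+δ)(π'(k)+d) − r ≢ 0 (mod 2N)`, and (b) there is `k`
with `u₁(π(π'(k))+δ)π(π'(k)) − 2v·π'(k) − ε·u₂(k+d+δ)(k+d) − r ≢ 0 (mod 2N)`. -/
theorem stmt_17 (p : ℕ) (hp : p.Prime) (hp3 : 3 ≤ p) (n : ℕ) (hn : 2 ≤ n)
    (N N₁ : ℕ) (hN : N = p ^ n * N₁) (hcop : Nat.Coprime p N₁)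
    (r' : ℕ) (q : Fin r' → ℕ) (hq : ∀ i, (q i).Prime) (hinj : Function.Injective q)
    (hN₁ : N₁ = ∏ i, q i) (hqdvd : ∀ i, (q i - 1) ∣ (p - 1))
    (a b : ℤ)
    (hPP : Function.Bijective
      (fun x : ZMod N => x ^ p + (a : ZMod N) * x + (b : ZMod N)))
    (ha0 : ¬ a ≡ 0 [ZMOD (p : ℤ)]) (ha1 : ¬ a ≡ -1 [ZMOD (p : ℤ)])
    (f₂ f₁ : ℤ)
    (hPP' : Function.Bijective
      (fun x : ZMod N => (f₂ : ZMod N) * x ^ 2 + (f₁ : ZMod N) * x))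
    (hf₂ : f₂ ≡ 0 [ZMOD (p : ℤ)]) (hf₁ : ¬ f₁ ≡ 0 [ZMOD (p : ℤ)]) :
    ∀ (u₁ u₂ : ℤ), Int.gcd u₁ (N : ℤ) = 1 → Int.gcd u₂ (N : ℤ) = 1 →
      ∀ (v d r : ℤ) (ε : ℤ), (ε = 1 ∨ ε = -1) →
        ((∃ k : ℤ, ¬ ((2 * (N : ℤ)) ∣
            (u₁ * ((k ^ p + a * k + b) + ((N % 2 : ℕ) : ℤ)) * (k ^ p + a * k + b)
              - 2 * v * k
              - ε * u₂ * ((f₂ * k ^ 2 + f₁ * k) + d + ((N % 2 : ℕ) : ℤ))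
                  * ((f₂ * k ^ 2 + f₁ * k) + d) - r))) ∧
          (∃ k : ℤ, ¬ ((2 * (N : ℤ)) ∣
            (u₁ * (((f₂ * k ^ 2 + f₁ * k) ^ p + a * (f₂ * k ^ 2 + f₁ * k) + b)
                    + ((N % 2 : ℕ) : ℤ))
                * ((f₂ * k ^ 2 + f₁ * k) ^ p + a * (f₂ * k ^ 2 + f₁ * k) + b)
              - 2 * v * (f₂ * k ^ 2 + f₁ * k)
              - ε * u₂ * (k + d + ((N % 2 : ℕ) : ℤ)) * (k + d) - r)))) := by
  intro u₁ u₂ hu₁g hu₂g v d r ε hε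
  haveI : Fact p.Prime := ⟨hp⟩
  have hp0 : (p : ℤ) ≠ 0 := Int.natCast_ne_zero.mpr hp.ne_zero
  have hpdN : (p : ℤ) ^ 2 ∣ (N : ℤ) := by
    have h : p ^ 2 ∣ N := by
      rw [hN]; exact dvd_mul_of_dvd_left (pow_dvd_pow p hn) N₁
    exact_mod_cast Int.natCast_dvd_natCast.mpr h
  have hp2N : (p : ℤ) ^ 2 ∣ 2 * (N : ℤ) := hpdN.mul_left 2
  have hpp : (p : ℤ) ∣ (p : ℤ) ^ 2 := dvd_pow_self _ (by norm_num)
  have hu1K : ((u₁ : ZMod p)) ≠ 0 := by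
    intro h
    have h1 : (p : ℤ) ∣ u₁ := (ZMod.intCast_zmod_eq_zero_iff_dvd _ _).mp h
    have h2 : (p : ℤ) ∣ (N : ℤ) := hpp.trans hpdN
    have h3 : (p : ℤ) ∣ (Int.gcd u₁ (N : ℤ) : ℤ) := Int.dvd_coe_gcd h1 h2
    rw [hu₁g] at h3
    have := Int.le_of_dvd one_pos h3
    omega
  have haK : ((a : ZMod p) + 1) ≠ 0 := by
    intro h
    apply ha1
    rw [← ZMod.intCast_eq_intCast_iff]
    push_cast
    linear_combination h
  have hf2K : ((f₂ : ZMod p)) = 0 := by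
    have := (ZMod.intCast_eq_intCast_iff f₂ 0 p).mpr hf₂
    simpa using this
  have hf1K : ((f₁ : ZMod p)) ≠ 0 := by
    intro h
    exact hf₁ ((ZMod.intCast_eq_intCast_iff f₁ 0 p).mp (by simpa using h))
  have h20 : (2 : ZMod p) ≠ 0 := by
    intro h
    have h1 : ((2 : ℤ) : ZMod p) = 0 := by exact_mod_cast h
    have h2 : (p : ℤ) ∣ 2 := (ZMod.intCast_zmod_eq_zero_iff_dvd _ _).mp h1
    have := Int.le_of_dvd (by norm_num) h2
    omega
  constructor
  · -- part (a)
    by_contra hcon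
    push_neg at hcon
    have h2 : ∀ k : ℤ, (p : ℤ) ^ 2 ∣
        (u₁ * ((k ^ p + a * k + b) + ((N % 2 : ℕ) : ℤ)) * (k ^ p + a * k + b)
          - 2 * v * k
          - ε * u₂ * ((f₂ * k ^ 2 + f₁ * k) + d + ((N % 2 : ℕ) : ℤ))
              * ((f₂ * k ^ 2 + f₁ * k) + d) - r) := fun k => hp2N.trans (hcon k)
    have H1 : ∀ k : ℤ,
        (u₁ : ZMod p) * (((k : ZMod p) + a * k + b) + (((N : ℤ) % 2 : ℤ) : ZMod p))
            * ((k : ZMod p) + a * k + b)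
          - 2 * v * k
          - ε * u₂ * ((f₁ : ZMod p) * k + d + (((N : ℤ) % 2 : ℤ) : ZMod p))
              * ((f₁ : ZMod p) * k + d) - r = 0 := by
      intro k
      have h := (ZMod.intCast_zmod_eq_zero_iff_dvd _ p).mpr (hpp.trans (h2 k))
      push_cast at h
      simp only [ZMod.pow_card, hf2K] at h
      linear_combination h
    have H2 : ∀ k : ℤ,
        (u₁ : ZMod p) * a * ((((k : ZMod p) + a * k + b) + ((k : ZMod p) + a * k + b))
            + (((N : ℤ) % 2 : ℤ) : ZMod p))
          - 2 * v
          - ε * u₂ * f₁ * ((((f₁ : ZMod p) * k + d) + ((f₁ : ZMod p) * k + d))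
            + (((N : ℤ) % 2 : ℤ) : ZMod p)) = 0 := by
      intro k
      have hdp : (p : ℤ) ^ 2 ∣ (k + (p : ℤ)) ^ p - k ^ p := by
        have h := dvd_sub_pow_of_dvd_sub (R := ℤ) (p := p) (a := k + (p : ℤ)) (b := k)
          ⟨1, by ring⟩ 1
        simpa using h
      obtain ⟨m, hm⟩ := hdp
      have hk : (k + (p : ℤ)) ^ p = k ^ p + (p : ℤ) ^ 2 * m := by linarith
      have hsub := dvd_sub (h2 (k + (p : ℤ))) (h2 k)
      have hdiff :
          (u₁ * (((k + (p : ℤ)) ^ p + a * (k + (p : ℤ)) + b) + ((N % 2 : ℕ) : ℤ))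
              * ((k + (p : ℤ)) ^ p + a * (k + (p : ℤ)) + b)
            - 2 * v * (k + (p : ℤ))
            - ε * u₂ * ((f₂ * (k + (p : ℤ)) ^ 2 + f₁ * (k + (p : ℤ))) + d + ((N % 2 : ℕ) : ℤ))
                * ((f₂ * (k + (p : ℤ)) ^ 2 + f₁ * (k + (p : ℤ))) + d) - r)
          - (u₁ * ((k ^ p + a * k + b) + ((N % 2 : ℕ) : ℤ)) * (k ^ p + a * k + b)
            - 2 * v * k
            - ε * u₂ * ((f₂ * k ^ 2 + f₁ * k) + d + ((N % 2 : ℕ) : ℤ))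
                * ((f₂ * k ^ 2 + f₁ * k) + d) - r)
          = (p : ℤ) * (u₁ * ((p : ℤ) * m + a)
                * (((k + (p : ℤ)) ^ p + a * (k + (p : ℤ)) + b) + (k ^ p + a * k + b)
                  + ((N % 2 : ℕ) : ℤ))
              - 2 * v
              - ε * u₂ * (2 * f₂ * k + f₂ * (p : ℤ) + f₁)
                * ((f₂ * (k + (p : ℤ)) ^ 2 + f₁ * (k + (p : ℤ)) + d)
                  + (f₂ * k ^ 2 + f₁ * k + d) + ((N % 2 : ℕ) : ℤ))) := by
        rw [hk]; ring
      rw [hdiff, pow_two] at hsub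
      have hB := (mul_dvd_mul_iff_left hp0).mp hsub
      have h := (ZMod.intCast_zmod_eq_zero_iff_dvd _ p).mpr hB
      push_cast at h
      simp only [ZMod.natCast_self, ZMod.pow_card, hf2K] at h
      linear_combination h
    have e0 := H1 0
    have e1 := H1 1
    have em := H1 (-1)
    have g0 := H2 0
    have g1 := H2 1
    push_cast at e0 e1 em g0 g1
    have h2A : (2 : ZMod p) *
        ((u₁ : ZMod p) * (1 + (a : ZMod p)) ^ 2 - ε * u₂ * (f₁ : ZMod p) ^ 2) = 0 := by
      linear_combination e1 + em - 2 * e0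
    have h2G : (2 : ZMod p) *
        ((u₁ : ZMod p) * a * (1 + (a : ZMod p)) - ε * u₂ * (f₁ : ZMod p) ^ 2) = 0 := by
      linear_combination g1 - g0
    have hA := (mul_eq_zero.mp h2A).resolve_left h20
    have hG := (mul_eq_zero.mp h2G).resolve_left h20
    have hfin : (u₁ : ZMod p) * (1 + (a : ZMod p)) = 0 := by
      linear_combination hA - hG
    rcases mul_eq_zero.mp hfin with h | h
    · exact hu1K h
    · exact haK (by linear_combination h)
  · -- part (b)
    by_contra hcon
    push_neg at hcon
    have h2 : ∀ k : ℤ, (p : ℤ) ^ 2 ∣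
        (u₁ * (((f₂ * k ^ 2 + f₁ * k) ^ p + a * (f₂ * k ^ 2 + f₁ * k) + b)
                + ((N % 2 : ℕ) : ℤ))
            * ((f₂ * k ^ 2 + f₁ * k) ^ p + a * (f₂ * k ^ 2 + f₁ * k) + b)
          - 2 * v * (f₂ * k ^ 2 + f₁ * k)
          - ε * u₂ * (k + d + ((N % 2 : ℕ) : ℤ)) * (k + d) - r) :=
      fun k => hp2N.trans (hcon k)
    have H1 : ∀ k : ℤ,
        (u₁ : ZMod p) * (((f₁ : ZMod p) * k + a * ((f₁ : ZMod p) * k) + b)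
            + (((N : ℤ) % 2 : ℤ) : ZMod p))
            * ((f₁ : ZMod p) * k + a * ((f₁ : ZMod p) * k) + b)
          - 2 * v * ((f₁ : ZMod p) * k)
          - ε * u₂ * ((k : ZMod p) + d + (((N : ℤ) % 2 : ℤ) : ZMod p)) * ((k : ZMod p) + d)
          - r = 0 := by
      intro k
      have h := (ZMod.intCast_zmod_eq_zero_iff_dvd _ p).mpr (hpp.trans (h2 k))
      push_cast at h
      simp only [hf2K, ZMod.pow_card] at h
      linear_combination h
    have H2 : ∀ k : ℤ,
        (u₁ : ZMod p) * (a * f₁) * ((((f₁ : ZMod p) * k + a * ((f₁ : ZMod p) * k) + b)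
            + ((f₁ : ZMod p) * k + a * ((f₁ : ZMod p) * k) + b)) + (((N : ℤ) % 2 : ℤ) : ZMod p))
          - 2 * v * f₁
          - ε * u₂ * (2 * (k : ZMod p) + 2 * d + (((N : ℤ) % 2 : ℤ) : ZMod p)) = 0 := by
      intro k
      have hdp : (p : ℤ) ^ 2 ∣
          (f₂ * (k + (p : ℤ)) ^ 2 + f₁ * (k + (p : ℤ))) ^ p - (f₂ * k ^ 2 + f₁ * k) ^ p := by
        have h := dvd_sub_pow_of_dvd_sub (R := ℤ) (p := p)
          (a := f₂ * (k + (p : ℤ)) ^ 2 + f₁ * (k + (p : ℤ))) (b := f₂ * k ^ 2 + f₁ * k)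
          ⟨2 * f₂ * k + f₂ * (p : ℤ) + f₁, by ring⟩ 1
        simpa using h
      obtain ⟨m, hm⟩ := hdp
      have hk : (f₂ * (k + (p : ℤ)) ^ 2 + f₁ * (k + (p : ℤ))) ^ p
          = (f₂ * k ^ 2 + f₁ * k) ^ p + (p : ℤ) ^ 2 * m := by linarith
      have hsub := dvd_sub (h2 (k + (p : ℤ))) (h2 k)
      have hdiff :
          (u₁ * (((f₂ * (k + (p : ℤ)) ^ 2 + f₁ * (k + (p : ℤ))) ^ p
                    + a * (f₂ * (k + (p : ℤ)) ^ 2 + f₁ * (k + (p : ℤ))) + b)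
                  + ((N % 2 : ℕ) : ℤ))
              * ((f₂ * (k + (p : ℤ)) ^ 2 + f₁ * (k + (p : ℤ))) ^ p
                  + a * (f₂ * (k + (p : ℤ)) ^ 2 + f₁ * (k + (p : ℤ))) + b)
            - 2 * v * (f₂ * (k + (p : ℤ)) ^ 2 + f₁ * (k + (p : ℤ)))
            - ε * u₂ * ((k + (p : ℤ)) + d + ((N % 2 : ℕ) : ℤ)) * ((k + (p : ℤ)) + d) - r)
          - (u₁ * (((f₂ * k ^ 2 + f₁ * k) ^ p + a * (f₂ * k ^ 2 + f₁ * k) + b)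
                  + ((N % 2 : ℕ) : ℤ))
              * ((f₂ * k ^ 2 + f₁ * k) ^ p + a * (f₂ * k ^ 2 + f₁ * k) + b)
            - 2 * v * (f₂ * k ^ 2 + f₁ * k)
            - ε * u₂ * (k + d + ((N % 2 : ℕ) : ℤ)) * (k + d) - r)
          = (p : ℤ) * (u₁ * ((p : ℤ) * m + a * (2 * f₂ * k + f₂ * (p : ℤ) + f₁))
                * (((f₂ * (k + (p : ℤ)) ^ 2 + f₁ * (k + (p : ℤ))) ^ p
                      + a * (f₂ * (k + (p : ℤ)) ^ 2 + f₁ * (k + (p : ℤ))) + b)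
                  + ((f₂ * k ^ 2 + f₁ * k) ^ p + a * (f₂ * k ^ 2 + f₁ * k) + b)
                  + ((N % 2 : ℕ) : ℤ))
              - 2 * v * (2 * f₂ * k + f₂ * (p : ℤ) + f₁)
              - ε * u₂ * (2 * k + 2 * d + (p : ℤ) + ((N % 2 : ℕ) : ℤ))) := by
        rw [hk]; ring
      rw [hdiff, pow_two] at hsub
      have hB := (mul_dvd_mul_iff_left hp0).mp hsub
      have h := (ZMod.intCast_zmod_eq_zero_iff_dvd _ p).mpr hB
      push_cast at h
      simp only [ZMod.natCast_self, hf2K, ZMod.pow_card] at h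
      linear_combination h
    have e0 := H1 0
    have e1 := H1 1
    have em := H1 (-1)
    have g0 := H2 0
    have g1 := H2 1
    push_cast at e0 e1 em g0 g1
    have h2A : (2 : ZMod p) *
        ((u₁ : ZMod p) * (1 + (a : ZMod p)) ^ 2 * (f₁ : ZMod p) ^ 2
          - ε * u₂) = 0 := by
      linear_combination e1 + em - 2 * e0
    have h2G : (2 : ZMod p) *
        ((u₁ : ZMod p) * a * (1 + (a : ZMod p)) * (f₁ : ZMod p) ^ 2
          - ε * u₂) = 0 := by
      linear_combination g1 - g0
    have hA := (mul_eq_zero.mp h2A).resolve_left h20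
    have hG := (mul_eq_zero.mp h2G).resolve_left h20
    have hfin : (u₁ : ZMod p) * (1 + (a : ZMod p)) * (f₁ : ZMod p) ^ 2 = 0 := by
      linear_combination hA - hG
    rcases mul_eq_zero.mp hfin with h | h
    · rcases mul_eq_zero.mp h with h' | h'
      · exact hu1K h'
      · exact haK (by linear_combination h')
    · exact hf1K ((pow_eq_zero_iff (by norm_num : (2:ℕ) ≠ 0)).mp h)
end
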